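/- Let H be a complex Hilbert space and n a natural number. The set of operators T ∈ B(H) whose range is contained in some subspace of H of dimension at most n is closed in the weak operator topology on B(H). -/

import Mathlib

open scoped InnerProductSpace

/-- Gram determinant of a linearly independent family is nonzero. -/
lemma gram_det_ne_zero {H : Type*} [NormedAddCommGroup H] [InnerProductSpace ℂ H]
    {m : ℕ} {v : Fin m → H} (hv : LinearIndependent ℂ v) :
    (Matrix.of fun i j => (⟪v j, v i⟫_ℂ)).det ≠ 0 := by
  intro h
  obtain ⟨c, hc0, hc⟩ := Matrix.exists_vecMul_eq_zero_iff.2 h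
  set w : H := ∑ i, c i • v i with hw
  have hvw : ∀ j, ⟪v j, w⟫_ℂ = 0 := by
    intro j
    have := congrFun hc j
    simp only [Matrix.vecMul, dotProduct, Matrix.of_apply, Pi.zero_apply] at this
    rw [hw, inner_sum]
    simpa [inner_smul_right] using this
  have hww : ⟪w, w⟫_ℂ = 0 := by
    rw [hw, sum_inner]
    simp only [inner_smul_left]
    simp [hvw, ← hw]
  have hw0 : w = 0 := inner_self_eq_zero.mp hww
  have := Fintype.linearIndependent_iff.1 hv c (by rw [← hw]; exact hw0)
  exact hc0 (funext this)

/-- The set of operators on a complex Hilbert space `H` whose range is contained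
in some subspace of dimension at most `n` is closed in the weak operator topology. -/
theorem stmt5
    {H : Type*} [NormedAddCommGroup H] [InnerProductSpace ℂ H] [CompleteSpace H] (n : ℕ) :
    IsClosed {T : H →WOT[ℂ] H | ∃ V : Submodule ℂ H, FiniteDimensional ℂ V ∧
      Module.finrank ℂ V ≤ n ∧
      LinearMap.range ((ContinuousLinearMapWOT.toCLM T) : H →ₗ[ℂ] H) ≤ V} := by
  have key : {T : H →WOT[ℂ] H | ∃ V : Submodule ℂ H, FiniteDimensional ℂ V ∧
      Module.finrank ℂ V ≤ n ∧
      LinearMap.range ((ContinuousLinearMapWOT.toCLM T) : H →ₗ[ℂ] H) ≤ V} =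
      ⋂ (x : Fin (n+1) → H) (y : Fin (n+1) → H),
        {T : H →WOT[ℂ] H | (Matrix.of fun i j =>
          (⟪y j, (ContinuousLinearMapWOT.toCLM T) (x i)⟫_ℂ)).det = 0} := by
    ext T
    set f : H →ₗ[ℂ] H := ((ContinuousLinearMapWOT.toCLM T) : H →ₗ[ℂ] H) with hf
    simp only [Set.mem_setOf_eq, Set.mem_iInter]
    constructor
    · rintro ⟨V, hfd, hrank, hle⟩ x y
      -- the images T (x i) lie in V, hence are dependent
      have hmem : ∀ i, f (x i) ∈ V := fun i => hle (LinearMap.mem_range_self f (x i))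
      have hdep : ¬ LinearIndependent ℂ (fun i : Fin (n+1) => (⟨f (x i), hmem i⟩ : V)) := by
        intro hli
        have := hli.fintype_card_le_finrank
        simp only [Fintype.card_fin] at this
        omega
      obtain ⟨g, hg, i0, hi0⟩ := Fintype.not_linearIndependent_iff.1 hdep
      have hsum : ∑ i, g i • f (x i) = 0 := by
        have := congrArg (Subtype.val) hg
        simpa using this
      refine Matrix.exists_vecMul_eq_zero_iff.1 ⟨g, ?_, ?_⟩
      · intro h0
        exact hi0 (congrFun h0 i0)
      · funext j
        simp only [Matrix.vecMul, dotProduct, Matrix.of_apply, Pi.zero_apply]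
        calc ∑ i, g i * ⟪y j, f (x i)⟫_ℂ = ⟪y j, ∑ i, g i • f (x i)⟫_ℂ := by
              rw [inner_sum]; simp [inner_smul_right]
          _ = 0 := by rw [hsum, inner_zero_right]
    · intro h
      refine ⟨LinearMap.range f, ?_, ?_, le_rfl⟩
      all_goals {
        have hrank : Module.rank ℂ (LinearMap.range f) ≤ n := by
          by_contra hlt
          rw [not_le] at hlt
          have hle : ((n + 1 : ℕ) : Cardinal) ≤ LinearMap.rank f := by
            rw [LinearMap.rank]
            push_cast
            exact (Cardinal.add_one_le_succ _).trans (Order.succ_le_of_lt hlt)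
          obtain ⟨s, hcard, hli⟩ := LinearMap.le_rank_iff_exists_linearIndependent_finset.1 hle
          have e : Fin (n+1) ≃ (s : Set H) :=
            ((s.equivFin).trans (finCongr hcard)).symm
          have hli' : LinearIndependent ℂ (fun i : Fin (n+1) => f ((e i : H))) :=
            hli.comp e e.injective
          have := h (fun i => (e i : H)) (fun i => f ((e i : H)))
          exact gram_det_ne_zero hli' this
        first
        | exact IsNoetherian.iff_fg.1 <| IsNoetherian.iff_rank_lt_aleph0.2 <| hrank.trans_lt (Cardinal.nat_lt_aleph0 n)
        | exact Module.finrank_le_of_rank_le hrank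
      }
  rw [key]
  refine isClosed_iInter fun x => isClosed_iInter fun y => ?_
  have hcont : Continuous fun T : H →WOT[ℂ] H => (Matrix.of fun i j =>
      (⟪y j, (ContinuousLinearMapWOT.toCLM T) (x i)⟫_ℂ)).det := by
    refine Continuous.matrix_det (continuous_matrix fun i j => ?_)
    exact ContinuousLinearMapWOT.continuous_dual_apply (x i) (innerSL ℂ (y j))
  exact isClosed_eq hcont continuous_const
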